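/- Let n ∈ ℕ and let ε^1, …, ε^n be independent {-1,1}-valued random variables with common mean m, and let S, ζ(S) ⊆ {1,…,n} be disjoint collections of distinct indices with |S| ≥ 3, together with further distinct indices η(1),…,η(p) and a pair ℓ ≠ ℓ' from {1,…,n}. Then E[∏_{r∈S}(ε^r − ε^{ζ(r)}) ∏_{l=1}^{p} ε^{η(l)} ε^{ℓ} ε^{ℓ'}] = 0. -/

import Mathlib

open MeasureTheory ProbabilityTheory
open scoped ENNReal
set_option maxHeartbeats 2000000

section Stmt15Aux

variable {α : Type*} [DecidableEq α]

/-- `±1` sign pattern associated with a finset. -/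
def stmt15_indR (v : α) (s : Finset α) : ℝ := if v ∈ s then 1 else -1

lemma stmt15_indR_ne_zero (v : α) (s : Finset α) : stmt15_indR v s ≠ 0 := by
  unfold stmt15_indR; split <;> norm_num

lemma stmt15_indR_cases (v : α) (s : Finset α) :
    stmt15_indR v s = 1 ∨ stmt15_indR v s = -1 := by
  unfold stmt15_indR; split <;> simp

lemma stmt15_indR_of_mem {v : α} {s : Finset α} (h : v ∈ s) : stmt15_indR v s = 1 := if_pos h

lemma stmt15_indR_of_not_mem {v : α} {s : Finset α} (h : v ∉ s) : stmt15_indR v s = -1 :=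
  if_neg h

lemma stmt15_indR_insert_of_ne {v a : α} (s : Finset α) (h : v ≠ a) :
    stmt15_indR v (insert a s) = stmt15_indR v s := by
  unfold stmt15_indR
  simp [Finset.mem_insert, h]

/-- toggle membership of an element -/
def stmt15_tog (a : α) (T : Finset α) : Finset α := if a ∈ T then T.erase a else insert a T

lemma stmt15_mem_tog_of_ne {a b : α} {T : Finset α} (h : b ≠ a) : b ∈ stmt15_tog a T ↔ b ∈ T := by
  unfold stmt15_tog; split <;> simp [Finset.mem_erase, Finset.mem_insert, h]

lemma stmt15_prod_tog (f : α → ℝ) (hf : ∀ v, f v * f v = 1) (T : Finset α) (a : α) :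
    (∏ v ∈ stmt15_tog a T, f v) = (∏ v ∈ T, f v) * f a := by
  unfold stmt15_tog
  split
  · rename_i h
    rw [← Finset.mul_prod_erase T f h, mul_comm (f a) _, mul_assoc, hf a, mul_one]
  · rename_i h
    rw [Finset.prod_insert h, mul_comm]

lemma stmt15_nullMeasurable_of_sum_le {Ω : Type*} [MeasurableSpace Ω] (μ : Measure Ω)
    [IsProbabilityMeasure μ] {P : Set Ω} (h : μ P + μ Pᶜ ≤ 1) :
    NullMeasurableSet P μ := by
  have hH'm : MeasurableSet (toMeasurable μ Pᶜ) := measurableSet_toMeasurable μ Pᶜ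
  have hsub : P ⊆ toMeasurable μ P := subset_toMeasurable μ P
  have hsub' : Pᶜ ⊆ toMeasurable μ Pᶜ := subset_toMeasurable μ Pᶜ
  have huniv : toMeasurable μ P ∪ toMeasurable μ Pᶜ = Set.univ := by
    apply Set.eq_univ_of_univ_subset
    intro x _
    rcases Classical.em (x ∈ P) with hx | hx
    · exact Or.inl (hsub hx)
    · exact Or.inr (hsub' hx)
  have hmeasadd := measure_union_add_inter (μ := μ) (toMeasurable μ P) hH'm
  rw [huniv, measure_univ, measure_toMeasurable, measure_toMeasurable] at hmeasadd
  have hnull : μ (toMeasurable μ P ∩ toMeasurable μ Pᶜ) = 0 := by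
    have h1 : (1 : ℝ≥0∞) + μ (toMeasurable μ P ∩ toMeasurable μ Pᶜ) ≤ 1 + 0 := by
      rw [add_zero, hmeasadd]; exact h
    have := (ENNReal.add_le_add_iff_left (by norm_num : (1 : ℝ≥0∞) ≠ ⊤)).mp h1
    exact le_antisymm this (zero_le)
  have hP : P = (toMeasurable μ Pᶜ)ᶜ ∪ (P ∩ (toMeasurable μ P ∩ toMeasurable μ Pᶜ)) := by
    ext x
    constructor
    · intro hx
      by_cases hx' : x ∈ toMeasurable μ Pᶜ
      · exact Or.inr ⟨hx, hsub hx, hx'⟩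
      · exact Or.inl hx'
    · rintro (hx | hx)
      · by_contra hxP
        exact hx (hsub' hxP)
      · exact hx.1
  rw [hP]
  exact (hH'm.compl.nullMeasurableSet).union
    (NullMeasurableSet.of_null (measure_mono_null Set.inter_subset_right hnull))

end Stmt15Aux

open MeasureTheory ProbabilityTheory in
/-- For `|S| ≥ 3` the first-order cavity term vanishes: any pair `ℓ ≠ ℓ'` can
touch at most two of the difference factors, leaving a free factor with mean 0. -/
theorem stmt_15 {Ω : Type*} [MeasurableSpace Ω] (μ : Measure Ω)
    [IsProbabilityMeasure μ] (n p : ℕ) (ε : Fin n → Ω → ℝ)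
    (hval : ∀ i ω, ε i ω = -1 ∨ ε i ω = 1)
    (m : ℝ) (hmean : ∀ i, ∫ ω, ε i ω ∂μ = m)
    (hind : iIndepFun ε μ)
    (S : Finset (Fin n)) (hS : 3 ≤ S.card) (ζ : Fin n → Fin n)
    (hζinj : Set.InjOn ζ S) (hSζ : Disjoint S (S.image ζ))
    (η : Fin p → Fin n) (hηinj : Function.Injective η)
    (hηS : ∀ l, η l ∉ S ∧ η l ∉ S.image ζ)
    (ℓ ℓ' : Fin n) (hℓ : ℓ ≠ ℓ') :
    ∫ ω, (∏ r ∈ S, (ε r ω - ε (ζ r) ω)) * (∏ l : Fin p, ε (η l) ω)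
        * ε ℓ ω * ε ℓ' ω ∂μ = 0 := by
  classical
  -- basic pointwise facts
  have hsq : ∀ v ω, ε v ω * ε v ω = 1 := by
    intro v ω; rcases hval v ω with h | h <;> rw [h] <;> norm_num
  have hcompl : ∀ v, ε v ⁻¹' {(-1 : ℝ)} = (ε v ⁻¹' {(1 : ℝ)})ᶜ := by
    intro v; ext ω
    simp only [Set.mem_preimage, Set.mem_singleton_iff, Set.mem_compl_iff]
    constructor
    · intro h h1; rw [h1] at h; norm_num at h
    · intro h; rcases hval v ω with h' | h'
      · exact h'
      · exact absurd h' h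
  have prodrule : ∀ (t : Finset (Fin n)) (g : Fin n → ℝ),
      μ (⋂ v ∈ t, ε v ⁻¹' {g v}) = ∏ v ∈ t, μ (ε v ⁻¹' {g v}) := by
    intro t g
    exact hind.measure_inter_preimage_eq_mul t (sets := fun i => {g i})
      (fun i _ => measurableSet_singleton (g i))
  set T : Finset (Fin n) := Finset.image η Finset.univ with hT
  set M : Finset (Fin n) := stmt15_tog ℓ' (stmt15_tog ℓ T) with hM
  set V : Finset (Fin n) := (S ∪ S.image ζ) ∪ M with hV
  have hdisj : ∀ a, a ∈ S → a ∈ S.image ζ → False := fun a h1 h2 =>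
    Finset.disjoint_left.mp hSζ h1 h2
  have hTS : ∀ v ∈ T, v ∉ S ∧ v ∉ S.image ζ := by
    intro v hv
    obtain ⟨l, _, rfl⟩ := Finset.mem_image.mp hv
    exact hηS l
  have hSV : ∀ r ∈ S, r ∈ V := by
    intro r hr; rw [hV]
    exact Finset.mem_union_left _ (Finset.mem_union_left _ hr)
  have himgV : ∀ r ∈ S, ζ r ∈ V := by
    intro r hr; rw [hV]
    exact Finset.mem_union_left _ (Finset.mem_union_right _ (Finset.mem_image_of_mem ζ hr))
  have hMV : ∀ v ∈ M, v ∈ V := by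
    intro v hv; rw [hV]; exact Finset.mem_union_right _ hv
  -- choice of the free pair r₀, ζ r₀
  obtain ⟨r₀, hr₀S, hr₀ℓ, hr₀ℓ', hζr₀ℓ, hζr₀ℓ'⟩ :
      ∃ r₀ ∈ S, r₀ ≠ ℓ ∧ r₀ ≠ ℓ' ∧ ζ r₀ ≠ ℓ ∧ ζ r₀ ≠ ℓ' := by
    have hcard1 : ∀ x : Fin n, (S.filter fun r => r = x ∨ ζ r = x).card ≤ 1 := by
      intro x
      rw [Finset.card_le_one]
      intro a ha b hb
      simp only [Finset.mem_filter] at ha hb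
      rcases ha.2 with h1 | h1 <;> rcases hb.2 with h2 | h2
      · rw [h1, h2]
      · exfalso; apply hdisj a ha.1; rw [h1, ← h2]
        exact Finset.mem_image_of_mem ζ hb.1
      · exfalso; apply hdisj b hb.1; rw [h2, ← h1]
        exact Finset.mem_image_of_mem ζ ha.1
      · exact hζinj ha.1 hb.1 (by rw [h1, h2])
    have hB : ((S.filter fun r => r = ℓ ∨ ζ r = ℓ) ∪
        (S.filter fun r => r = ℓ' ∨ ζ r = ℓ')).card ≤ 2 := by
      have h1 := hcard1 ℓ
      have h2 := hcard1 ℓ'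
      have := Finset.card_union_le (S.filter fun r => r = ℓ ∨ ζ r = ℓ)
        (S.filter fun r => r = ℓ' ∨ ζ r = ℓ')
      omega
    have hnsub : ¬ S ⊆ (S.filter fun r => r = ℓ ∨ ζ r = ℓ) ∪
        (S.filter fun r => r = ℓ' ∨ ζ r = ℓ') := by
      intro hsub
      have := Finset.card_le_card hsub
      omega
    obtain ⟨r₀, hr₀S, hr₀B⟩ := Finset.not_subset.mp hnsub
    simp only [Finset.mem_union, Finset.mem_filter, not_or] at hr₀B
    push_neg at hr₀B
    exact ⟨r₀, hr₀S, (hr₀B.1 hr₀S).1, (hr₀B.2 hr₀S).1, (hr₀B.1 hr₀S).2, (hr₀B.2 hr₀S).2⟩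
  have hζr₀img : ζ r₀ ∈ S.image ζ := Finset.mem_image_of_mem ζ hr₀S
  have hr₀img : r₀ ∉ S.image ζ := fun h => hdisj r₀ hr₀S h
  have hζr₀S : ζ r₀ ∉ S := fun h => hdisj (ζ r₀) h hζr₀img
  have hner₀ : r₀ ≠ ζ r₀ := fun h => hr₀img (h ▸ hζr₀img)
  have hr₀T : r₀ ∉ T := fun h => (hTS r₀ h).1 hr₀S
  have hζr₀T : ζ r₀ ∉ T := fun h => (hTS (ζ r₀) h).2 hζr₀img
  have hr₀M : r₀ ∉ M := by
    rw [hM, stmt15_mem_tog_of_ne hr₀ℓ', stmt15_mem_tog_of_ne hr₀ℓ]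
    exact hr₀T
  have hζr₀M : ζ r₀ ∉ M := by
    rw [hM, stmt15_mem_tog_of_ne hζr₀ℓ', stmt15_mem_tog_of_ne hζr₀ℓ]
    exact hζr₀T
  have hr₀V : r₀ ∈ V := hSV r₀ hr₀S
  have hζr₀V : ζ r₀ ∈ V := himgV r₀ hr₀S
  -- rewrite of the integrand
  have hFrw : ∀ ω, (∏ r ∈ S, (ε r ω - ε (ζ r) ω)) * (∏ l : Fin p, ε (η l) ω)
      * ε ℓ ω * ε ℓ' ω
      = (∏ r ∈ S, (ε r ω - ε (ζ r) ω)) * ∏ v ∈ M, ε v ω := by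
    intro ω
    have h1 : (∏ l : Fin p, ε (η l) ω) = ∏ v ∈ T, ε v ω := by
      rw [hT, Finset.prod_image]
      intro x _ y _ h
      exact hηinj h
    have h2 : (∏ v ∈ M, ε v ω) = ((∏ v ∈ T, ε v ω) * ε ℓ ω) * ε ℓ' ω := by
      rw [hM, stmt15_prod_tog (fun v => ε v ω) (fun v => hsq v ω),
        stmt15_prod_tog (fun v => ε v ω) (fun v => hsq v ω)]
    rw [h1, h2]; ring
  set G : Ω → ℝ := fun ω => (∏ r ∈ S, (ε r ω - ε (ζ r) ω)) * ∏ v ∈ M, ε v ω with hG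
  have hGoal : (∫ ω, (∏ r ∈ S, (ε r ω - ε (ζ r) ω)) * (∏ l : Fin p, ε (η l) ω)
      * ε ℓ ω * ε ℓ' ω ∂μ) = ∫ ω, G ω ∂μ := by
    apply integral_congr_ae
    exact Filter.Eventually.of_forall hFrw
  rw [hGoal]
  -- trivial case: one of the difference factors vanishes a.e.
  by_cases hD : ∀ r ∈ S, μ {ω | ε r ω ≠ ε (ζ r) ω} ≠ 0
  swap
  · push_neg at hD
    obtain ⟨r, hrS, hr0⟩ := hD
    have hae : G =ᵐ[μ] 0 := by
      rw [Filter.EventuallyEq, ae_iff]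
      apply measure_mono_null _ hr0
      intro ω hω
      simp only [Set.mem_setOf_eq, Pi.zero_apply] at hω ⊢
      intro heq
      apply hω
      rw [hG]
      simp only []
      rw [Finset.prod_eq_zero hrS (by rw [heq]; ring), zero_mul]
    rw [integral_congr_ae hae]; simp
  -- trivial case: non-integrable
  by_cases hInt : Integrable G μ
  swap
  · exact integral_undef hInt
    -- both orientations of each non-a.e.-degenerate difference factor
  have hDsplit : ∀ r ∈ S, μ (ε r ⁻¹' {(1:ℝ)} ∩ ε (ζ r) ⁻¹' {(-1:ℝ)}) ≠ 0 ∨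
      μ (ε r ⁻¹' {(-1:ℝ)} ∩ ε (ζ r) ⁻¹' {(1:ℝ)}) ≠ 0 := by
    intro r hr
    by_contra hcon
    push_neg at hcon
    apply hD r hr
    have hset : {ω | ε r ω ≠ ε (ζ r) ω} ⊆
        (ε r ⁻¹' {(1:ℝ)} ∩ ε (ζ r) ⁻¹' {(-1:ℝ)}) ∪
        (ε r ⁻¹' {(-1:ℝ)} ∩ ε (ζ r) ⁻¹' {(1:ℝ)}) := by
      intro ω hω
      simp only [Set.mem_setOf_eq] at hω
      rcases hval r ω with h1 | h1 <;> rcases hval (ζ r) ω with h2 | h2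
      · exact absurd (h1.trans h2.symm) hω
      · exact Or.inr ⟨h1, h2⟩
      · exact Or.inl ⟨h1, h2⟩
      · exact absurd (h1.trans h2.symm) hω
    exact measure_mono_null hset (measure_union_null hcon.1 hcon.2)
  -- choice of a sign for each coordinate giving positive-measure cells
  set c : Fin n → Prop := fun r => μ (ε r ⁻¹' {(1:ℝ)} ∩ ε (ζ r) ⁻¹' {(-1:ℝ)}) ≠ 0 with hcdef
  set invζ : Fin n → Fin n :=
    fun v => if h : ∃ r, r ∈ S ∧ ζ r = v then h.choose else v with hinv
  have hinvζ : ∀ r ∈ S, invζ (ζ r) = r := by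
    intro r hr
    have hex : ∃ r', r' ∈ S ∧ ζ r' = ζ r := ⟨r, hr, rfl⟩
    rw [hinv]
    simp only [dif_pos hex]
    exact hζinj hex.choose_spec.1 hr hex.choose_spec.2
  set posS : Fin n → Prop := fun v =>
    if v ∈ S then c v else if v ∈ S.image ζ then ¬ c (invζ v)
    else μ (ε v ⁻¹' {(1:ℝ)}) ≠ 0 with hposS
  set sgn : Fin n → ℝ := fun v => if posS v then 1 else -1 with hsgn
  have hsgn_cases : ∀ v, sgn v = 1 ∨ sgn v = -1 := by
    intro v; rw [hsgn]; dsimp only; split <;> simp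
  have hsgn_ne : ∀ v, sgn v ≠ 0 := by
    intro v; rcases hsgn_cases v with h | h <;> rw [h] <;> norm_num
  have hposS_S : ∀ r ∈ S, (posS r ↔ c r) := by
    intro r hr; rw [hposS]; simp only [if_pos hr]
  have hposS_img : ∀ r ∈ S, (posS (ζ r) ↔ ¬ c r) := by
    intro r hr
    have h1 : ζ r ∉ S := fun h => hdisj (ζ r) h (Finset.mem_image_of_mem ζ hr)
    rw [hposS]
    simp only [if_neg h1, if_pos (Finset.mem_image_of_mem ζ hr), hinvζ r hr]
  have hsgn_pair : ∀ r ∈ S, sgn (ζ r) = - sgn r := by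
    intro r hr
    by_cases hcr : c r
    · rw [hsgn]; dsimp only
      rw [if_pos ((hposS_S r hr).mpr hcr), if_neg (fun h => ((hposS_img r hr).mp h) hcr)]
      try norm_num
    · rw [hsgn]; dsimp only
      rw [if_neg (fun h => hcr ((hposS_S r hr).mp h)), if_pos ((hposS_img r hr).mpr hcr)]
      try norm_num
  have hpos : ∀ v ∈ V, μ (ε v ⁻¹' {sgn v}) ≠ 0 := by
    intro v hv
    by_cases hvS : v ∈ S
    · by_cases hcv : c v
      · have hh : sgn v = 1 := by rw [hsgn]; exact if_pos ((hposS_S v hvS).mpr hcv)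
        rw [hh]
        intro h0
        exact hcv (measure_mono_null Set.inter_subset_left h0)
      · have hh : sgn v = -1 := by
          rw [hsgn]; exact if_neg (fun h => hcv ((hposS_S v hvS).mp h))
        rw [hh]
        have h2 : μ (ε v ⁻¹' {(-1:ℝ)} ∩ ε (ζ v) ⁻¹' {(1:ℝ)}) ≠ 0 := by
          rcases hDsplit v hvS with h | h
          · exact absurd h hcv
          · exact h
        intro h0
        exact h2 (measure_mono_null Set.inter_subset_left h0)
    · by_cases hvimg : v ∈ S.image ζ
      · obtain ⟨r, hrS, rfl⟩ := Finset.mem_image.mp hvimg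
        by_cases hcr : c r
        · have hh : sgn (ζ r) = -1 := by
            rw [hsgn]; exact if_neg (fun h => ((hposS_img r hrS).mp h) hcr)
          rw [hh]
          intro h0
          exact hcr (measure_mono_null Set.inter_subset_right h0)
        · have hh : sgn (ζ r) = 1 := by
            rw [hsgn]; exact if_pos ((hposS_img r hrS).mpr hcr)
          rw [hh]
          have h2 : μ (ε r ⁻¹' {(-1:ℝ)} ∩ ε (ζ r) ⁻¹' {(1:ℝ)}) ≠ 0 := by
            rcases hDsplit r hrS with h | h
            · exact absurd h hcr
            · exact h
          intro h0
          exact h2 (measure_mono_null Set.inter_subset_right h0)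
      · have hps : posS v ↔ μ (ε v ⁻¹' {(1:ℝ)}) ≠ 0 := by
          rw [hposS]; simp only [if_neg hvS, if_neg hvimg]
        by_cases hμ1 : μ (ε v ⁻¹' {(1:ℝ)}) ≠ 0
        · have hh : sgn v = 1 := by rw [hsgn]; exact if_pos (hps.mpr hμ1)
          rw [hh]; exact hμ1
        · push_neg at hμ1
          have hh : sgn v = -1 := by
            rw [hsgn]; exact if_neg (fun h => (hps.mp h) hμ1)
          rw [hh]
          intro h0
          have hcover : (Set.univ : Set Ω) ⊆ ε v ⁻¹' {(1:ℝ)} ∪ ε v ⁻¹' {(-1:ℝ)} := by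
            intro ω _
            rcases hval v ω with h | h
            · exact Or.inr h
            · exact Or.inl h
          have : (1:ℝ≥0∞) ≤ 0 := by
            calc (1:ℝ≥0∞) = μ Set.univ := measure_univ.symm
              _ ≤ μ (ε v ⁻¹' {(1:ℝ)} ∪ ε v ⁻¹' {(-1:ℝ)}) := measure_mono hcover
              _ ≤ μ (ε v ⁻¹' {(1:ℝ)}) + μ (ε v ⁻¹' {(-1:ℝ)}) := measure_union_le _ _
              _ = 0 := by rw [hμ1, h0, add_zero]
          simp at this
  -- the value of G on a sign-pattern cell
  set Φ : Finset (Fin n) → ℝ := fun s =>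
    (∏ r ∈ S, (stmt15_indR r s - stmt15_indR (ζ r) s)) * ∏ v ∈ M, stmt15_indR v s with hΦ
  have hΦval : ∀ (s : Finset (Fin n)) (ω : Ω), (∀ v ∈ V, ε v ω = stmt15_indR v s) →
      G ω = Φ s := by
    intro s ω h
    rw [hG, hΦ]
    dsimp only
    congr 1
    · exact Finset.prod_congr rfl fun r hr => by
        rw [h r (hSV r hr), h (ζ r) (himgV r hr)]
    · exact Finset.prod_congr rfl fun v hv => h v (hMV v hv)
  have hatom_mem : ∀ (s t : Finset (Fin n)) (ω : Ω),
      ω ∈ (⋂ v ∈ t, ε v ⁻¹' {stmt15_indR v s}) ↔ ∀ v ∈ t, ε v ω = stmt15_indR v s := by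
    intro s t ω
    simp only [Set.mem_iInter, Set.mem_preimage, Set.mem_singleton_iff]
  -- null-measurability of every relevant coordinate
  have hnullm : ∀ k ∈ V, NullMeasurableSet (ε k ⁻¹' {(1:ℝ)}) μ := by
    intro k hk
    set s'' : Finset (Fin n) := (V.erase k).filter posS with hs''
    have hindRs : ∀ v ∈ V.erase k, stmt15_indR v s'' = sgn v := by
      intro v hv
      by_cases h : posS v
      · rw [stmt15_indR_of_mem (Finset.mem_filter.mpr ⟨hv, h⟩), hsgn]
        exact (if_pos h).symm
      · rw [stmt15_indR_of_not_mem (fun hmem => h (Finset.mem_filter.mp hmem).2), hsgn]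
        exact (if_neg h).symm
    set C : Set Ω := ⋂ v ∈ V.erase k, ε v ⁻¹' {stmt15_indR v s''} with hC
    have hCpos : μ C ≠ 0 := by
      rw [hC, prodrule, Finset.prod_ne_zero_iff]
      intro v hv
      rw [hindRs v hv]
      exact hpos v (Finset.mem_of_mem_erase hv)
    have hks'' : k ∉ s'' := fun h => Finset.notMem_erase k V (Finset.mem_filter.mp h).1
    set su : Finset (Fin n) := insert k s'' with hsu
    have hsu_ind : ∀ v, v ≠ k → stmt15_indR v su = stmt15_indR v s'' := by
      intro v hv; rw [hsu]; exact stmt15_indR_insert_of_ne _ hv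
    have hkV' : k ∉ V.erase k := Finset.notMem_erase k V
    have hEu : (⋂ v ∈ V, ε v ⁻¹' {stmt15_indR v su}) = ε k ⁻¹' {(1:ℝ)} ∩ C := by
      ext ω
      rw [hatom_mem su V ω]
      constructor
      · intro h
        refine ⟨?_, ?_⟩
        · have := h k hk
          rwa [hsu, stmt15_indR_of_mem (Finset.mem_insert_self k s'')] at this
        · rw [hC]
          rw [hatom_mem s'' (V.erase k) ω]
          intro v hv
          rw [← hsu_ind v (Finset.ne_of_mem_erase hv)]
          exact h v (Finset.mem_of_mem_erase hv)
      · rintro ⟨h1, h2⟩ v hv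
        by_cases hvk : v = k
        · subst hvk
          rw [hsu, stmt15_indR_of_mem (Finset.mem_insert_self v s'')]
          exact h1
        · rw [hsu_ind v hvk]
          rw [hC, hatom_mem s'' (V.erase k) ω] at h2
          exact h2 v (Finset.mem_erase.mpr ⟨hvk, hv⟩)
    have hEv : (⋂ v ∈ V, ε v ⁻¹' {stmt15_indR v s''}) = ε k ⁻¹' {(-1:ℝ)} ∩ C := by
      ext ω
      rw [hatom_mem s'' V ω]
      constructor
      · intro h
        refine ⟨?_, ?_⟩
        · have := h k hk
          rwa [stmt15_indR_of_not_mem hks''] at this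
        · rw [hC, hatom_mem s'' (V.erase k) ω]
          intro v hv
          exact h v (Finset.mem_of_mem_erase hv)
      · rintro ⟨h1, h2⟩ v hv
        by_cases hvk : v = k
        · subst hvk
          rw [stmt15_indR_of_not_mem hks'']
          exact h1
        · rw [hC, hatom_mem s'' (V.erase k) ω] at h2
          exact h2 v (Finset.mem_erase.mpr ⟨hvk, hv⟩)
    have hmu_u : μ (ε k ⁻¹' {(1:ℝ)} ∩ C) = μ (ε k ⁻¹' {(1:ℝ)}) * μ C := by
      rw [← hEu, prodrule,
        ← Finset.mul_prod_erase V (fun v => μ (ε v ⁻¹' {stmt15_indR v su})) hk]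
      congr 1
      · rw [hsu, stmt15_indR_of_mem (Finset.mem_insert_self k s'')]
      · rw [hC, prodrule]
        exact Finset.prod_congr rfl fun v hv => by
          rw [hsu_ind v (Finset.ne_of_mem_erase hv)]
    have hmu_v : μ (ε k ⁻¹' {(-1:ℝ)} ∩ C) = μ (ε k ⁻¹' {(-1:ℝ)}) * μ C := by
      rw [← hEv, prodrule,
        ← Finset.mul_prod_erase V (fun v => μ (ε v ⁻¹' {stmt15_indR v s''})) hk]
      congr 1
      · rw [stmt15_indR_of_not_mem hks'']
      · rw [hC, prodrule]
    have huv : Φ su ≠ Φ s'' := by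
      have hindV : ∀ v ∈ V, v ≠ k → stmt15_indR v s'' = sgn v := fun v hv hvk =>
        hindRs v (Finset.mem_erase.mpr ⟨hvk, hv⟩)
      have hPMne : ∀ (s t : Finset (Fin n)), (∏ v ∈ t, stmt15_indR v s) ≠ 0 :=
        fun s t => Finset.prod_ne_zero_iff.mpr (fun v _ => stmt15_indR_ne_zero v s)
      have hpair_ne : ∀ r ∈ S, r ≠ k → ζ r ≠ k →
          stmt15_indR r s'' - stmt15_indR (ζ r) s'' ≠ 0 := by
        intro r hr h1 h2
        rw [hindV r (hSV r hr) h1, hindV (ζ r) (himgV r hr) h2, hsgn_pair r hr]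
        have hne := hsgn_ne r
        intro hcon
        apply hne
        linarith
      by_cases hkS : k ∈ S
      · have hζknk : ζ k ≠ k := fun h => hdisj k hkS (h ▸ Finset.mem_image_of_mem ζ hkS)
        have hQf : ∀ r ∈ S.erase k, r ≠ k ∧ ζ r ≠ k := by
          intro r hr
          refine ⟨Finset.ne_of_mem_erase hr, fun h => ?_⟩
          exact hdisj k hkS (h ▸ Finset.mem_image_of_mem ζ (Finset.mem_of_mem_erase hr))
        have hQne : (∏ r ∈ S.erase k, (stmt15_indR r s'' - stmt15_indR (ζ r) s'')) ≠ 0 := by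
          rw [Finset.prod_ne_zero_iff]
          intro r hr
          exact hpair_ne r (Finset.mem_of_mem_erase hr) (hQf r hr).1 (hQf r hr).2
        have hprodS : ∀ s : Finset (Fin n),
            (∀ v, v ≠ k → stmt15_indR v s = stmt15_indR v s'') →
            (∏ r ∈ S, (stmt15_indR r s - stmt15_indR (ζ r) s))
              = (stmt15_indR k s - stmt15_indR (ζ k) s'') *
                ∏ r ∈ S.erase k, (stmt15_indR r s'' - stmt15_indR (ζ r) s'') := by
          intro s hs
          rw [← Finset.mul_prod_erase S _ hkS, hs (ζ k) hζknk]
          congr 1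
          exact Finset.prod_congr rfl fun r hr => by
            rw [hs r (hQf r hr).1, hs (ζ r) (hQf r hr).2]
        have hSu := hprodS su hsu_ind
        have hSv := hprodS s'' (fun _ _ => rfl)
        rw [hsu, stmt15_indR_of_mem (Finset.mem_insert_self k s'')] at hSu
        rw [stmt15_indR_of_not_mem hks''] at hSv
        have he := stmt15_indR_cases (ζ k) s''
        have hene : stmt15_indR (ζ k) s'' ≠ 0 := stmt15_indR_ne_zero (ζ k) s''
        by_cases hkM : k ∈ M
        · have hMu : (∏ v ∈ M, stmt15_indR v su)
              = ∏ v ∈ M.erase k, stmt15_indR v s'' := by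
            rw [← Finset.mul_prod_erase M _ hkM, hsu,
              stmt15_indR_of_mem (Finset.mem_insert_self k s''), one_mul]
            exact Finset.prod_congr rfl fun v hv => hsu_ind v (Finset.ne_of_mem_erase hv)
          have hMv : (∏ v ∈ M, stmt15_indR v s'')
              = -1 * ∏ v ∈ M.erase k, stmt15_indR v s'' := by
            rw [← Finset.mul_prod_erase M _ hkM, stmt15_indR_of_not_mem hks'']
          rw [hΦ]
          dsimp only
          rw [hSu, hSv, hMu, hMv]
          intro hcon
          have h0 : (-2 : ℝ) * stmt15_indR (ζ k) s''
              * (∏ r ∈ S.erase k, (stmt15_indR r s'' - stmt15_indR (ζ r) s''))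
              * (∏ v ∈ M.erase k, stmt15_indR v s'') = 0 := by
            linear_combination hcon
          exact (mul_ne_zero (mul_ne_zero (mul_ne_zero (by norm_num : (-2:ℝ) ≠ 0) hene)
            hQne) (hPMne s'' (M.erase k))) h0
        · have hMc : (∏ v ∈ M, stmt15_indR v su) = ∏ v ∈ M, stmt15_indR v s'' :=
            Finset.prod_congr rfl fun v hv => hsu_ind v (fun h => hkM (h ▸ hv))
          rw [hΦ]
          dsimp only
          rw [hSu, hSv, hMc]
          intro hcon
          have h0 : (2 : ℝ)
              * (∏ r ∈ S.erase k, (stmt15_indR r s'' - stmt15_indR (ζ r) s''))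
              * (∏ v ∈ M, stmt15_indR v s'') = 0 := by
            linear_combination hcon
          exact (mul_ne_zero (mul_ne_zero (by norm_num : (2:ℝ) ≠ 0) hQne)
            (hPMne s'' M)) h0
      · by_cases hkimg : k ∈ S.image ζ
        · obtain ⟨rh, hrhS, hrhk⟩ := Finset.mem_image.mp hkimg
          have hrhne : rh ≠ k := fun h => hkS (h ▸ hrhS)
          have hQf : ∀ r ∈ S.erase rh, r ≠ k ∧ ζ r ≠ k := by
            intro r hr
            refine ⟨fun h => hkS (h ▸ Finset.mem_of_mem_erase hr), fun h => ?_⟩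
            exact (Finset.ne_of_mem_erase hr)
              (hζinj (Finset.mem_of_mem_erase hr) hrhS (h.trans hrhk.symm))
          have hQne : (∏ r ∈ S.erase rh, (stmt15_indR r s'' - stmt15_indR (ζ r) s'')) ≠ 0 := by
            rw [Finset.prod_ne_zero_iff]
            intro r hr
            exact hpair_ne r (Finset.mem_of_mem_erase hr) (hQf r hr).1 (hQf r hr).2
          have hprodS : ∀ s : Finset (Fin n),
              (∀ v, v ≠ k → stmt15_indR v s = stmt15_indR v s'') →
              (∏ r ∈ S, (stmt15_indR r s - stmt15_indR (ζ r) s))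
                = (stmt15_indR rh s'' - stmt15_indR k s) *
                  ∏ r ∈ S.erase rh, (stmt15_indR r s'' - stmt15_indR (ζ r) s'') := by
            intro s hs
            rw [← Finset.mul_prod_erase S _ hrhS, hs rh hrhne, hrhk]
            congr 1
            exact Finset.prod_congr rfl fun r hr => by
              rw [hs r (hQf r hr).1, hs (ζ r) (hQf r hr).2]
          have hSu := hprodS su hsu_ind
          have hSv := hprodS s'' (fun _ _ => rfl)
          rw [hsu, stmt15_indR_of_mem (Finset.mem_insert_self k s'')] at hSu
          rw [stmt15_indR_of_not_mem hks''] at hSv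
          have hane : stmt15_indR rh s'' ≠ 0 := stmt15_indR_ne_zero rh s''
          by_cases hkM : k ∈ M
          · have hMu : (∏ v ∈ M, stmt15_indR v su)
                = ∏ v ∈ M.erase k, stmt15_indR v s'' := by
              rw [← Finset.mul_prod_erase M _ hkM, hsu,
                stmt15_indR_of_mem (Finset.mem_insert_self k s''), one_mul]
              exact Finset.prod_congr rfl fun v hv => hsu_ind v (Finset.ne_of_mem_erase hv)
            have hMv : (∏ v ∈ M, stmt15_indR v s'')
                = -1 * ∏ v ∈ M.erase k, stmt15_indR v s'' := by
              rw [← Finset.mul_prod_erase M _ hkM, stmt15_indR_of_not_mem hks'']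
            rw [hΦ]
            dsimp only
            rw [hSu, hSv, hMu, hMv]
            intro hcon
            have h0 : (2 : ℝ) * stmt15_indR rh s''
                * (∏ r ∈ S.erase rh, (stmt15_indR r s'' - stmt15_indR (ζ r) s''))
                * (∏ v ∈ M.erase k, stmt15_indR v s'') = 0 := by
              linear_combination hcon
            exact (mul_ne_zero (mul_ne_zero (mul_ne_zero (by norm_num : (2:ℝ) ≠ 0) hane)
              hQne) (hPMne s'' (M.erase k))) h0
          · have hMc : (∏ v ∈ M, stmt15_indR v su) = ∏ v ∈ M, stmt15_indR v s'' :=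
              Finset.prod_congr rfl fun v hv => hsu_ind v (fun h => hkM (h ▸ hv))
            rw [hΦ]
            dsimp only
            rw [hSu, hSv, hMc]
            intro hcon
            have h0 : (-2 : ℝ)
                * (∏ r ∈ S.erase rh, (stmt15_indR r s'' - stmt15_indR (ζ r) s''))
                * (∏ v ∈ M, stmt15_indR v s'') = 0 := by
              linear_combination hcon
            exact (mul_ne_zero (mul_ne_zero (by norm_num : (-2:ℝ) ≠ 0) hQne)
              (hPMne s'' M)) h0
        · have hkM : k ∈ M := by
            have := hk
            rw [hV] at this
            rcases Finset.mem_union.mp this with h | h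
            · rcases Finset.mem_union.mp h with h' | h'
              · exact absurd h' hkS
              · exact absurd h' hkimg
            · exact h
          have hPSc : (∏ r ∈ S, (stmt15_indR r su - stmt15_indR (ζ r) su))
              = ∏ r ∈ S, (stmt15_indR r s'' - stmt15_indR (ζ r) s'') :=
            Finset.prod_congr rfl fun r hr => by
              rw [hsu_ind r (fun h => hkS (h ▸ hr)),
                hsu_ind (ζ r) (fun h => hkimg (h ▸ Finset.mem_image_of_mem ζ hr))]
          have hPSne : (∏ r ∈ S, (stmt15_indR r s'' - stmt15_indR (ζ r) s'')) ≠ 0 := by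
            rw [Finset.prod_ne_zero_iff]
            intro r hr
            exact hpair_ne r hr (fun h => hkS (h ▸ hr))
              (fun h => hkimg (h ▸ Finset.mem_image_of_mem ζ hr))
          have hMu : (∏ v ∈ M, stmt15_indR v su)
              = ∏ v ∈ M.erase k, stmt15_indR v s'' := by
            rw [← Finset.mul_prod_erase M _ hkM, hsu,
              stmt15_indR_of_mem (Finset.mem_insert_self k s''), one_mul]
            exact Finset.prod_congr rfl fun v hv => hsu_ind v (Finset.ne_of_mem_erase hv)
          have hMv : (∏ v ∈ M, stmt15_indR v s'')
              = -1 * ∏ v ∈ M.erase k, stmt15_indR v s'' := by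
            rw [← Finset.mul_prod_erase M _ hkM, stmt15_indR_of_not_mem hks'']
          rw [hΦ]
          dsimp only
          rw [hPSc, hMu, hMv]
          intro hcon
          have h0 : (2 : ℝ)
              * (∏ r ∈ S, (stmt15_indR r s'' - stmt15_indR (ζ r) s''))
              * (∏ v ∈ M.erase k, stmt15_indR v s'') = 0 := by
            linear_combination hcon
          exact (mul_ne_zero (mul_ne_zero (by norm_num : (2:ℝ) ≠ 0) hPSne)
            (hPMne s'' (M.erase k))) h0
    have hGu : ∀ ω ∈ ε k ⁻¹' {(1:ℝ)} ∩ C, G ω = Φ su := by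
      intro ω hω
      rw [← hEu] at hω
      exact hΦval su ω ((hatom_mem su V ω).mp hω)
    have hGv : ∀ ω ∈ ε k ⁻¹' {(-1:ℝ)} ∩ C, G ω = Φ s'' := by
      intro ω hω
      rw [← hEv] at hω
      exact hΦval s'' ω ((hatom_mem s'' V ω).mp hω)
    obtain ⟨G', hG'm, hGG'⟩ := hInt.1
    have hNnull : μ {ω | G ω ≠ G' ω} = 0 := by
      have := hGG'
      rwa [Filter.EventuallyEq, ae_iff] at this
    set Mu : Set Ω := G' ⁻¹' {Φ su} with hMudef
    have hMum : MeasurableSet Mu := hG'm.measurable (measurableSet_singleton _)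
    have h7 : μ (ε k ⁻¹' {(1:ℝ)} ∩ C) = μ (C ∩ Mu) := by
      apply measure_congr
      rw [MeasureTheory.ae_eq_set]
      constructor
      · apply measure_mono_null _ hNnull
        rintro ω ⟨hω1, hω2⟩
        simp only [Set.mem_setOf_eq]
        intro hGG
        apply hω2
        refine ⟨hω1.2, ?_⟩
        rw [hMudef]
        simp only [Set.mem_preimage, Set.mem_singleton_iff]
        rw [← hGG]
        exact hGu ω hω1
      · apply measure_mono_null _ hNnull
        rintro ω ⟨⟨hωC, hωMu⟩, hω2⟩
        simp only [Set.mem_setOf_eq]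
        intro hGG
        apply hω2
        refine ⟨?_, hωC⟩
        rcases hval k ω with h | h
        · exfalso
          have hGv' : G ω = Φ s'' := hGv ω ⟨h, hωC⟩
          rw [hGG] at hGv'
          rw [hMudef] at hωMu
          simp only [Set.mem_preimage, Set.mem_singleton_iff] at hωMu
          exact huv (hωMu.symm.trans hGv')
        · exact h
    have h8 : μ (ε k ⁻¹' {(-1:ℝ)} ∩ C) = μ (C \ Mu) := by
      apply measure_congr
      rw [MeasureTheory.ae_eq_set]
      constructor
      · apply measure_mono_null _ hNnull
        rintro ω ⟨hω1, hω2⟩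
        simp only [Set.mem_setOf_eq]
        intro hGG
        apply hω2
        refine ⟨hω1.2, ?_⟩
        intro hωMu
        rw [hMudef] at hωMu
        simp only [Set.mem_preimage, Set.mem_singleton_iff] at hωMu
        have hGv' : G ω = Φ s'' := hGv ω hω1
        rw [hGG] at hGv'
        exact huv (hωMu.symm.trans hGv')
      · apply measure_mono_null _ hNnull
        rintro ω ⟨⟨hωC, hωMu⟩, hω2⟩
        simp only [Set.mem_setOf_eq]
        intro hGG
        apply hω2
        refine ⟨?_, hωC⟩
        rcases hval k ω with h | h
        · exact h
        · exfalso
          apply hωMu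
          rw [hMudef]
          simp only [Set.mem_preimage, Set.mem_singleton_iff]
          rw [← hGG]
          exact hGu ω ⟨h, hωC⟩
    have h9 := measure_inter_add_diff (μ := μ) C hMum
    rw [← h7, ← h8, hmu_u, hmu_v] at h9
    have h10 : (μ (ε k ⁻¹' {(1:ℝ)}) + μ (ε k ⁻¹' {(-1:ℝ)})) * μ C = 1 * μ C := by
      rw [add_mul, one_mul, h9]
    have hsum : μ (ε k ⁻¹' {(1:ℝ)}) + μ (ε k ⁻¹' {(-1:ℝ)}) = 1 :=
      (ENNReal.mul_left_inj hCpos (measure_ne_top μ C)).mp h10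
    rw [hcompl k] at hsum
    exact stmt15_nullMeasurable_of_sum_le μ (le_of_eq hsum)
    -- every atom over V is null measurable
  have hatom_null : ∀ s : Finset (Fin n),
      NullMeasurableSet (⋂ v ∈ V, ε v ⁻¹' {stmt15_indR v s}) μ := by
    intro s
    apply Finset.nullMeasurableSet_biInter
    intro v hv
    rcases stmt15_indR_cases v s with h | h
    · rw [h]
      exact hnullm v hv
    · rw [h, hcompl v]
      exact (hnullm v hv).compl
  -- value and integrability of each atom term
  have hterm : ∀ s : Finset (Fin n),
      (∫ ω, Φ s * Set.indicator (⋂ v ∈ V, ε v ⁻¹' {stmt15_indR v s})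
          (fun _ => (1:ℝ)) ω ∂μ)
        = Φ s * (μ (⋂ v ∈ V, ε v ⁻¹' {stmt15_indR v s})).toReal
      ∧ Integrable (fun ω => Φ s * Set.indicator (⋂ v ∈ V, ε v ⁻¹' {stmt15_indR v s})
          (fun _ => (1:ℝ)) ω) μ := by
    intro s
    have hnm := hatom_null s
    have haeq := NullMeasurableSet.toMeasurable_ae_eq hnm
    have hmeas := measurableSet_toMeasurable μ (⋂ v ∈ V, ε v ⁻¹' {stmt15_indR v s})
    have hind_ae : (fun ω => Φ s * Set.indicator (⋂ v ∈ V, ε v ⁻¹' {stmt15_indR v s})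
          (fun _ => (1:ℝ)) ω)
        =ᵐ[μ] (fun ω => Φ s * Set.indicator
          (toMeasurable μ (⋂ v ∈ V, ε v ⁻¹' {stmt15_indR v s})) (fun _ => (1:ℝ)) ω) := by
      have h2 := indicator_ae_eq_of_ae_eq_set (f := fun _ => (1:ℝ)) haeq.symm
      filter_upwards [h2] with ω hω
      rw [hω]
    constructor
    · rw [integral_congr_ae hind_ae, integral_const_mul,
        integral_indicator_const (1:ℝ) hmeas, measureReal_def, measure_toMeasurable]
      rw [smul_eq_mul, mul_one]
    · apply Integrable.congr _ hind_ae.symm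
      exact ((integrable_const (1:ℝ)).indicator hmeas).const_mul (Φ s)
  -- pointwise atom decomposition of G
  have hptwise : ∀ ω, G ω = ∑ s ∈ V.powerset,
      Φ s * Set.indicator (⋂ v ∈ V, ε v ⁻¹' {stmt15_indR v s}) (fun _ => (1:ℝ)) ω := by
    intro ω
    set s₀ := V.filter (fun v => ε v ω = 1) with hs₀
    have hs₀mem : s₀ ∈ V.powerset := Finset.mem_powerset.mpr (Finset.filter_subset _ _)
    have hεs₀ : ∀ v ∈ V, ε v ω = stmt15_indR v s₀ := by
      intro v hv
      by_cases h : ε v ω = 1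
      · rw [stmt15_indR_of_mem (Finset.mem_filter.mpr ⟨hv, h⟩), h]
      · have hne : v ∉ s₀ := fun hmem => h (Finset.mem_filter.mp hmem).2
        rw [stmt15_indR_of_not_mem hne]
        rcases hval v ω with h' | h'
        · exact h'
        · exact absurd h' h
    rw [Finset.sum_eq_single s₀]
    · rw [Set.indicator_of_mem ((hatom_mem s₀ V ω).mpr hεs₀), mul_one]
      exact hΦval s₀ ω hεs₀
    · intro s hs hne
      have hnotmem : ω ∉ ⋂ v ∈ V, ε v ⁻¹' {stmt15_indR v s} := by
        intro hmem
        apply hne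
        have hmem' := (hatom_mem s V ω).mp hmem
        ext v
        constructor
        · intro hvs
          have hvV : v ∈ V := Finset.mem_powerset.mp hs hvs
          have h1 := hmem' v hvV
          rw [stmt15_indR_of_mem hvs] at h1
          exact Finset.mem_filter.mpr ⟨hvV, h1⟩
        · intro hvs₀
          have hvV : v ∈ V := (Finset.mem_filter.mp hvs₀).1
          by_contra hvs
          have h1 := hmem' v hvV
          rw [stmt15_indR_of_not_mem hvs] at h1
          have h2 := (Finset.mem_filter.mp hvs₀).2
          rw [h2] at h1
          norm_num at h1
      rw [Set.indicator_of_notMem hnotmem, mul_zero]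
    · intro h
      exact absurd hs₀mem h
  have hsum : (∫ ω, G ω ∂μ) = ∑ s ∈ V.powerset,
      Φ s * (μ (⋂ v ∈ V, ε v ⁻¹' {stmt15_indR v s})).toReal := by
    rw [integral_congr_ae (Filter.Eventually.of_forall hptwise),
      integral_finset_sum _ (fun s _ => (hterm s).2)]
    exact Finset.sum_congr rfl fun s _ => (hterm s).1
  rw [hsum]
  have hμatom : ∀ s : Finset (Fin n), (μ (⋂ v ∈ V, ε v ⁻¹' {stmt15_indR v s})).toReal
      = ∏ v ∈ V, (μ (ε v ⁻¹' {stmt15_indR v s})).toReal := by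
    intro s
    rw [prodrule, ENNReal.toReal_prod]
  simp only [hμatom]
  -- marginal values on V
  have hmarg1 : ∀ v ∈ V, (μ (ε v ⁻¹' {(1:ℝ)})).toReal = (1 + m) / 2 := by
    intro v hv
    have hnm := hnullm v hv
    have haeq := NullMeasurableSet.toMeasurable_ae_eq hnm
    have hmeas := measurableSet_toMeasurable μ (ε v ⁻¹' {(1:ℝ)})
    have hptw : ∀ ω, ε v ω
        = Set.indicator (ε v ⁻¹' {(1:ℝ)}) (fun _ => (2:ℝ)) ω - 1 := by
      intro ω
      rcases hval v ω with h | h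
      · rw [Set.indicator_of_notMem
          (by simp only [Set.mem_preimage, Set.mem_singleton_iff, h]; norm_num :
            ω ∉ ε v ⁻¹' {(1:ℝ)}), h]
        norm_num
      · rw [Set.indicator_of_mem
          (by simp [Set.mem_preimage, h] : ω ∈ ε v ⁻¹' {(1:ℝ)}), h]
        norm_num
    have hint : (∫ ω, ε v ω ∂μ) = 2 * (μ (ε v ⁻¹' {(1:ℝ)})).toReal - 1 := by
      rw [integral_congr_ae (Filter.Eventually.of_forall hptw)]
      have hind_ae : (fun ω => Set.indicator (ε v ⁻¹' {(1:ℝ)}) (fun _ => (2:ℝ)) ω - 1)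
          =ᵐ[μ] (fun ω => Set.indicator (toMeasurable μ (ε v ⁻¹' {(1:ℝ)}))
            (fun _ => (2:ℝ)) ω - 1) := by
        have h2 := indicator_ae_eq_of_ae_eq_set (f := fun _ => (2:ℝ)) haeq.symm
        filter_upwards [h2] with ω hω
        rw [hω]
      rw [integral_congr_ae hind_ae,
        integral_sub ((integrable_const (2:ℝ)).indicator hmeas) (integrable_const (1:ℝ)),
        integral_indicator_const (2:ℝ) hmeas, integral_const, measureReal_def, measure_toMeasurable]
      simp [smul_eq_mul]
      ring
    rw [hmean v] at hint
    linarith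
  have hmargneg : ∀ v ∈ V, (μ (ε v ⁻¹' {(-1:ℝ)})).toReal = (1 - m) / 2 := by
    intro v hv
    rw [hcompl v, measure_compl₀ (hnullm v hv) (measure_ne_top μ _), measure_univ,
      ENNReal.toReal_sub_of_le prob_le_one (by norm_num), ENNReal.toReal_one,
      hmarg1 v hv]
    ring
  -- split the powerset sum along the free pair r₀, ζ r₀
  have hζmem : ζ r₀ ∈ V.erase r₀ :=
    Finset.mem_erase.mpr ⟨Ne.symm hner₀, hζr₀V⟩
  have hr₀nV' : r₀ ∉ insert (ζ r₀) ((V.erase r₀).erase (ζ r₀)) := by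
    rw [Finset.mem_insert]
    push_neg
    exact ⟨hner₀, fun h => Finset.notMem_erase r₀ V (Finset.mem_of_mem_erase h)⟩
  have hζnV' : ζ r₀ ∉ (V.erase r₀).erase (ζ r₀) := Finset.notMem_erase _ _
  have hVsplit2 : V = insert r₀ (insert (ζ r₀) ((V.erase r₀).erase (ζ r₀))) := by
    rw [Finset.insert_erase hζmem, Finset.insert_erase hr₀V]
  rw [hVsplit2, Finset.sum_powerset_insert hr₀nV', Finset.sum_powerset_insert hζnV',
    Finset.sum_powerset_insert hζnV', ← Finset.sum_add_distrib, ← Finset.sum_add_distrib,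
    ← Finset.sum_add_distrib]
  apply Finset.sum_eq_zero
  intro t ht
  have htV' : t ⊆ (V.erase r₀).erase (ζ r₀) := Finset.mem_powerset.mp ht
  have hr₀t : r₀ ∉ t := fun h => hr₀nV' (Finset.mem_insert_of_mem (htV' h))
  have hζt : ζ r₀ ∉ t := fun h => hζnV' (htV' h)
  -- canonical form of each term
  have hterm_eq : ∀ s : Finset (Fin n),
      Φ s * (∏ v ∈ insert r₀ (insert (ζ r₀) ((V.erase r₀).erase (ζ r₀))),
        (μ (ε v ⁻¹' {stmt15_indR v s})).toReal)
      = ((stmt15_indR r₀ s - stmt15_indR (ζ r₀) s)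
          * (μ (ε r₀ ⁻¹' {stmt15_indR r₀ s})).toReal
          * (μ (ε (ζ r₀) ⁻¹' {stmt15_indR (ζ r₀) s})).toReal)
        * (((∏ r ∈ S.erase r₀, (stmt15_indR r s - stmt15_indR (ζ r) s))
            * ∏ v ∈ M, stmt15_indR v s)
          * (∏ v ∈ (V.erase r₀).erase (ζ r₀), (μ (ε v ⁻¹' {stmt15_indR v s})).toReal)) := by
    intro s
    rw [hΦ]
    dsimp only
    rw [Finset.prod_insert hr₀nV', Finset.prod_insert hζnV',
      ← Finset.mul_prod_erase S _ hr₀S]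
    ring
  have hrest_eq : ∀ s : Finset (Fin n),
      (∀ v : Fin n, v ≠ r₀ → v ≠ ζ r₀ → stmt15_indR v s = stmt15_indR v t) →
      (((∏ r ∈ S.erase r₀, (stmt15_indR r s - stmt15_indR (ζ r) s))
          * ∏ v ∈ M, stmt15_indR v s)
        * (∏ v ∈ (V.erase r₀).erase (ζ r₀), (μ (ε v ⁻¹' {stmt15_indR v s})).toReal))
      = (((∏ r ∈ S.erase r₀, (stmt15_indR r t - stmt15_indR (ζ r) t))
          * ∏ v ∈ M, stmt15_indR v t)
        * (∏ v ∈ (V.erase r₀).erase (ζ r₀), (μ (ε v ⁻¹' {stmt15_indR v t})).toReal)) := by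
    intro s hss
    congr 1
    · congr 1
      · apply Finset.prod_congr rfl
        intro r hr
        have hrS := Finset.mem_of_mem_erase hr
        have h1 : r ≠ r₀ := Finset.ne_of_mem_erase hr
        have h2 : r ≠ ζ r₀ := fun h => hζr₀S (h ▸ hrS)
        have h3 : ζ r ≠ r₀ := fun h => hr₀img (h ▸ Finset.mem_image_of_mem ζ hrS)
        have h4 : ζ r ≠ ζ r₀ := fun h => h1 (hζinj hrS hr₀S h)
        rw [hss r h1 h2, hss (ζ r) h3 h4]
      · apply Finset.prod_congr rfl
        intro v hv
        exact hss v (fun h => hr₀M (h ▸ hv)) (fun h => hζr₀M (h ▸ hv))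
    · apply Finset.prod_congr rfl
      intro v hv
      have h1 : v ≠ r₀ := fun h =>
        Finset.notMem_erase r₀ V (Finset.mem_of_mem_erase (h ▸ hv))
      have h2 : v ≠ ζ r₀ := fun h => hζnV' (h ▸ hv)
      rw [hss v h1 h2]
  have hR2 := hrest_eq (insert (ζ r₀) t)
    (fun v _ h2 => stmt15_indR_insert_of_ne t h2)
  have hR3 := hrest_eq (insert r₀ t)
    (fun v h1 _ => stmt15_indR_insert_of_ne t h1)
  -- sign pattern values at the pair
  have hv1 : stmt15_indR r₀ t = -1 := stmt15_indR_of_not_mem hr₀t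
  have hv2 : stmt15_indR (ζ r₀) t = -1 := stmt15_indR_of_not_mem hζt
  have hv3 : stmt15_indR r₀ (insert (ζ r₀) t) = -1 :=
    stmt15_indR_of_not_mem (by
      rw [Finset.mem_insert]
      push_neg
      exact ⟨hner₀, hr₀t⟩)
  have hv4 : stmt15_indR (ζ r₀) (insert (ζ r₀) t) = 1 :=
    stmt15_indR_of_mem (Finset.mem_insert_self _ _)
  have hv5 : stmt15_indR r₀ (insert r₀ t) = 1 :=
    stmt15_indR_of_mem (Finset.mem_insert_self _ _)
  have hv6 : stmt15_indR (ζ r₀) (insert r₀ t) = -1 :=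
    stmt15_indR_of_not_mem (by
      rw [Finset.mem_insert]
      push_neg
      exact ⟨Ne.symm hner₀, hζt⟩)
  have hv7 : stmt15_indR r₀ (insert r₀ (insert (ζ r₀) t)) = 1 :=
    stmt15_indR_of_mem (Finset.mem_insert_self _ _)
  have hv8 : stmt15_indR (ζ r₀) (insert r₀ (insert (ζ r₀) t)) = 1 := by
    rw [stmt15_indR_insert_of_ne _ (Ne.symm hner₀)]
    exact hv4
  rw [hterm_eq t, hterm_eq (insert (ζ r₀) t), hterm_eq (insert r₀ t),
    hterm_eq (insert r₀ (insert (ζ r₀) t)), hR2, hR3, hv1, hv2, hv3, hv4, hv5, hv6,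
    hv7, hv8, hmarg1 r₀ hr₀V, hmarg1 (ζ r₀) hζr₀V, hmargneg r₀ hr₀V,
    hmargneg (ζ r₀) hζr₀V]
  ring
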